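/- For every skew-symmetric real 4×4 matrix F (indices in Fin 4 = {0,1,2,3}), with E_i := F(0,i) and B_i := ½ Σ_{j,k ∈ {1,2,3}} ε_{ijk} F(j,k) for i ∈ {1,2,3}, the determinant of η + F satisfies det(η + F) = −1 + Σ_i E_i² − Σ_i B_i² + (Σ_i E_i·B_i)², where η = diag(−1,1,1,1). (This is the Born–Infeld determinant identity det(η + F) = −1 + E·E − B·B + (B·E)².) -/

import Mathlib

noncomputable section

open Matrix

/-- The Levi-Civita symbol on three indices, with `ε₀₁₂ = 1`. -/
def eps3 (i j k : Fin 3) : ℝ :=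
  ((j : ℝ) - (i : ℝ)) * ((k : ℝ) - (i : ℝ)) * ((k : ℝ) - (j : ℝ)) / 2

/-- The `4×4` Minkowski metric matrix `η = diag(−1,1,1,1)`. -/
def etaM : Matrix (Fin 4) (Fin 4) ℝ := diagonal ![-1, 1, 1, 1]

/-- The electric components `E_i = F_{0i}` of a skew-symmetric `F`. -/
def Efield (F : Matrix (Fin 4) (Fin 4) ℝ) (i : Fin 3) : ℝ := F 0 i.succ

/-- The magnetic components `B_i = ½ ε_{ijk} F_{jk}` of a skew-symmetric `F`. -/
def Bfield (F : Matrix (Fin 4) (Fin 4) ℝ) (i : Fin 3) : ℝ :=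
  (1 / 2) * ∑ j : Fin 3, ∑ k : Fin 3, eps3 i j k * F j.succ k.succ


set_option maxHeartbeats 1600000 in
theorem my_det_fin_four (M : Matrix (Fin 4) (Fin 4) ℝ) :
    M.det =
      M 0 0 * (M 1 1 * (M 2 2 * M 3 3 - M 2 3 * M 3 2)
        - M 1 2 * (M 2 1 * M 3 3 - M 2 3 * M 3 1)
        + M 1 3 * (M 2 1 * M 3 2 - M 2 2 * M 3 1))
      - M 0 1 * (M 1 0 * (M 2 2 * M 3 3 - M 2 3 * M 3 2)
        - M 1 2 * (M 2 0 * M 3 3 - M 2 3 * M 3 0)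
        + M 1 3 * (M 2 0 * M 3 2 - M 2 2 * M 3 0))
      + M 0 2 * (M 1 0 * (M 2 1 * M 3 3 - M 2 3 * M 3 1)
        - M 1 1 * (M 2 0 * M 3 3 - M 2 3 * M 3 0)
        + M 1 3 * (M 2 0 * M 3 1 - M 2 1 * M 3 0))
      - M 0 3 * (M 1 0 * (M 2 1 * M 3 2 - M 2 2 * M 3 1)
        - M 1 1 * (M 2 0 * M 3 2 - M 2 2 * M 3 0)
        + M 1 2 * (M 2 0 * M 3 1 - M 2 1 * M 3 0)) := by
  rw [Matrix.det_succ_row_zero, Fin.sum_univ_four]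
  simp [Matrix.det_fin_three, Matrix.submatrix, Fin.succAbove]
  norm_num [show ((3:Fin 4):ℕ) = 3 from rfl]
  ring

/-- The Born–Infeld determinant identity
`det(η + F) = −1 + E·E − B·B + (B·E)²` for skew-symmetric `F`. -/
theorem born_infeld_determinant (F : Matrix (Fin 4) (Fin 4) ℝ)
    (hF : ∀ a b, F a b = -F b a) :
    (etaM + F).det
      = -1 + (∑ i : Fin 3, Efield F i ^ 2) - (∑ i : Fin 3, Bfield F i ^ 2)
          + (∑ i : Fin 3, Efield F i * Bfield F i) ^ 2 := by
  have h00 : F 0 0 = 0 := by linarith [hF 0 0]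
  have h11 : F 1 1 = 0 := by linarith [hF 1 1]
  have h22 : F 2 2 = 0 := by linarith [hF 2 2]
  have h33 : F 3 3 = 0 := by linarith [hF 3 3]
  have h10 : F 1 0 = -F 0 1 := hF 1 0
  have h20 : F 2 0 = -F 0 2 := hF 2 0
  have h30 : F 3 0 = -F 0 3 := hF 3 0
  have h21 : F 2 1 = -F 1 2 := hF 2 1
  have h31 : F 3 1 = -F 1 3 := hF 3 1
  have h32 : F 3 2 = -F 2 3 := hF 3 2
  simp only [Efield, Bfield, eps3, Fin.sum_univ_three,
    show ((0:Fin 3).succ) = 1 from rfl, show ((1:Fin 3).succ) = 2 from rfl,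
    show ((2:Fin 3).succ) = 3 from rfl]
  rw [my_det_fin_four]
  norm_num [etaM, Matrix.add_apply, Matrix.diagonal_apply, Fin.ext_iff,
    show ((0:Fin 4):ℕ) = 0 from rfl, show ((1:Fin 4):ℕ) = 1 from rfl,
    show ((2:Fin 4):ℕ) = 2 from rfl, show ((3:Fin 4):ℕ) = 3 from rfl, h00, h11, h22, h33, h10, h20, h30, h21, h31, h32,
    show ![(-1:ℝ), 1, 1, 1] 2 = 1 from rfl, show ![(-1:ℝ), 1, 1, 1] 3 = 1 from rfl]
  ring
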